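/- arXiv:1602.01410 — 2 statements merged into one kernel-verified Lean document; each statement's English description precedes it below -/
import Mathlib

section
/- If φ: ℝⁿ → ℝ ∪ {+∞} is a closed proper convex coercive function, D ∈ ℝ^{l×n} is any matrix, and f: ℝⁿ × ℝᵈ → ℝ is a convex quadratic function that is bounded below, then the function (x,z) ↦ f(x,z) + φ(D x) attains its minimum, i.e., the set of minimizers is nonempty. -/
open Matrix Filter Topology

lemma forall_add_mul_nonneg {a b : ℝ} (h : ∀ s : ℝ, 0 ≤ a + s * b) : b = 0 := by
  by_contra hb
  have h2 := h (-(a+1)/b)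
  rw [div_mul_cancel₀ _ hb] at h2
  linarith

lemma lsc_min_on_compact {X : Type*} [TopologicalSpace X] {s : Set X}
    (hs : IsCompact s) (hsc : IsClosed s) (hne : s.Nonempty) {f : X → EReal}
    (hf : LowerSemicontinuous f) : ∃ a ∈ s, ∀ b ∈ s, f a ≤ f b := by
  have hne' : Nonempty s := hne.to_subtype
  have key := IsCompact.nonempty_iInter_of_directed_nonempty_isCompact_isClosed
    (fun x : s => {y | y ∈ s ∧ f y ≤ f x})
    (fun x y => by
      rcases le_total (f x.1) (f y.1) with h | h
      · exact ⟨x, subset_rfl, fun z hz => ⟨hz.1, hz.2.trans h⟩⟩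
      · exact ⟨y, fun z hz => ⟨hz.1, hz.2.trans h⟩, subset_rfl⟩)
    (fun x => ⟨x.1, x.2, le_rfl⟩)
    (fun x => hs.inter_right (hf.isClosed_preimage (f x.1)))
    (fun x => hsc.inter (hf.isClosed_preimage (f x.1)))
  obtain ⟨a, ha⟩ := key
  simp only [Set.mem_iInter] at ha
  obtain ⟨b, hb⟩ := hne
  exact ⟨a, (ha ⟨b, hb⟩).1, fun c hc => (ha ⟨c, hc⟩).2⟩

/-- A lower bound for a lsc, coercive, never-⊥ function. -/
lemma exists_real_lower_bound {V : Type*} [NormedAddCommGroup V]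
    (φ : V → EReal) (hφ_closed : LowerSemicontinuous φ) (hφ_bot : ∀ v, φ v ≠ ⊥)
    (hφ_coercive : Tendsto φ (cocompact V) atTop) :
    ∃ mφ : ℝ, ∀ v, (mφ : EReal) ≤ φ v := by
  have h0 : {v | (0:EReal) ≤ φ v} ∈ cocompact V := hφ_coercive.eventually_ge_atTop 0
  obtain ⟨K, hKc, hK⟩ := mem_cocompact.mp h0
  rcases K.eq_empty_or_nonempty with hKe | hKne
  · refine ⟨0, fun v => hK ?_⟩
    simp [hKe]
  · obtain ⟨v₀, hv₀K, hv₀⟩ := lsc_min_on_compact hKc hKc.isClosed hKne hφ_closed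
    rcases eq_or_ne (φ v₀) ⊤ with htop | htop
    · refine ⟨0, fun v => ?_⟩
      by_cases hv : v ∈ K
      · exact le_trans (htop ▸ le_top) (hv₀ v hv)
      · exact hK hv
    · set r := (φ v₀).toReal with hr
      have hrle : (r : EReal) = φ v₀ := EReal.coe_toReal htop (hφ_bot v₀)
      refine ⟨min r 0, fun v => ?_⟩
      by_cases hv : v ∈ K
      · exact le_trans (le_trans (by exact_mod_cast min_le_left r 0) hrle.le) (hv₀ v hv)
      · exact le_trans (by exact_mod_cast min_le_right r 0) (hK hv)

theorem aux_main {E V : Type*} [NormedAddCommGroup E] [NormedSpace ℝ E]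
    [FiniteDimensional ℝ E] [NormedAddCommGroup V] [NormedSpace ℝ V]
    (q : E → ℝ) (quad : E → ℝ) (cross : E → E → ℝ) (lin : E → ℝ)
    (hq_cont : Continuous q) (hquad_cont : Continuous quad) (hlin_cont : Continuous lin)
    (hI : ∀ p u : E, ∀ t : ℝ, q (p + t • u) = q p + t * (cross p u + lin u) + t^2 * (quad u / 2))
    (hII : ∀ p u : E, ∀ s : ℝ, quad (p + s • u) = quad p + 2*s*(cross p u) + s^2 * quad u)
    (hcross0 : ∀ u, cross 0 u = 0)
    (hpos : ∀ u, 0 ≤ quad u)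
    (m : ℝ) (hm : ∀ p, m ≤ q p)
    (L : E →L[ℝ] V) (φ : V → EReal)
    (hφ_closed : LowerSemicontinuous φ) (hφ_bot : ∀ v, φ v ≠ ⊥)
    (hφ_coercive : Tendsto φ (cocompact V) atTop)
    (y₀ : E) (hy₀ : φ (L y₀) ≠ ⊤) :
    ∃ y : E, ∀ y' : E, (q y : EReal) + φ (L y) ≤ (q y' : EReal) + φ (L y') := by
  haveI : ProperSpace E := FiniteDimensional.proper ℝ E
  -- basic algebraic facts
  have hquad0 : quad 0 = 0 := by
    have h := hII 0 0 2
    simp only [smul_zero, add_zero, hcross0] at h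
    nlinarith [h]
  have hquad_smul : ∀ (c : ℝ) u, quad (c • u) = c^2 * quad u := by
    intro c u
    have h := hII 0 u c
    simpa [hquad0, hcross0] using h
  have hq_eq : ∀ u, q u = q 0 + lin u + quad u / 2 := by
    intro u
    have h := hI 0 u 1
    simpa [hcross0] using h
  -- kernel of the quadratic form kills cross terms
  have hcrosskill : ∀ u, quad u = 0 → ∀ p, cross p u = 0 := by
    intro u hu p
    have h : ∀ s : ℝ, 0 ≤ quad p + s * (2 * cross p u) := by
      intro s
      have := hpos (p + s • u)
      rw [hII p u s, hu] at this
      linarith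
    have := forall_add_mul_nonneg h
    linarith
  have hlin_kill : ∀ u, quad u = 0 → lin u = 0 := by
    intro u hu
    apply forall_add_mul_nonneg (a := q 0 - m)
    intro s
    have h := hI 0 u s
    simp only [hcross0, zero_add] at h
    have h2 := hm (s • u)
    rw [h, hu] at h2
    ring_nf at h2 ⊢
    linarith
  have hflat : ∀ u, quad u = 0 → ∀ p, q (p + u) = q p := by
    intro u hu p
    have h := hI p u 1
    rw [hcrosskill u hu p, hlin_kill u hu, hu] at h
    simpa using h
  have hlin_smul : ∀ (c : ℝ) u, lin (c • u) = c * lin u := by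
    intro c u
    have h1 := hq_eq (c • u)
    have h2 := hI 0 (c • u) 1
    have h3 := hI 0 u c
    rw [hquad_smul] at h1
    simp only [hcross0, zero_add, one_smul] at h2 h3
    nlinarith [h1, h3]
  -- the subspace of flat directions
  let N : Submodule ℝ E :=
    { carrier := {u | L u = 0 ∧ quad u = 0}
      add_mem' := by
        rintro u v ⟨hLu, hqu⟩ ⟨hLv, hqv⟩
        refine ⟨by simp [map_add, hLu, hLv], ?_⟩
        have h := hII u v 1
        rw [hcrosskill v hqv u, hqv, hqu] at h
        simpa using h
      zero_mem' := ⟨by simp, hquad0⟩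
      smul_mem' := by
        rintro c u ⟨hLu, hqu⟩
        exact ⟨by simp [_root_.map_smul, hLu], by rw [hquad_smul, hqu, mul_zero]⟩ }
  have hNmem : ∀ u, u ∈ N ↔ L u = 0 ∧ quad u = 0 := fun u => Iff.rfl
  obtain ⟨N', hNN'⟩ := Submodule.exists_isCompl N
  have hdec : ∀ y : E, ∃ u ∈ N, ∃ p ∈ N', u + p = y := by
    intro y
    have hy : y ∈ N ⊔ N' := by
      rw [hNN'.sup_eq_top]; trivial
    exact Submodule.mem_sup.mp hy
  -- invariance of the objective under N
  have hinv : ∀ p : E, ∀ u ∈ N, (q (u + p) : EReal) + φ (L (u + p)) = (q p : EReal) + φ (L p) := by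
    intro p u hu
    rw [add_comm u p, hflat u hu.2 p]
    have : L (p + u) = L p := by rw [map_add, hu.1, add_zero]
    rw [this]
  -- a finite value point
  obtain ⟨u₀, hu₀, p₀, hp₀, hup₀⟩ := hdec y₀
  have hLp₀ : L p₀ = L y₀ := by
    rw [← hup₀, map_add, hu₀.1, zero_add]
  have hφp₀ : φ (L p₀) ≠ ⊤ := hLp₀ ▸ hy₀
  obtain ⟨rφ, hrφ⟩ : ∃ r : ℝ, φ (L p₀) = (r : EReal) :=
    ⟨(φ (L p₀)).toReal, (EReal.coe_toReal hφp₀ (hφ_bot _)).symm⟩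
  set creal : ℝ := q p₀ + rφ with hcreal
  have hc : (q p₀ : EReal) + φ (L p₀) = (creal : EReal) := by
    rw [hrφ, hcreal, EReal.coe_add]
  obtain ⟨mφ, hmφ⟩ := exists_real_lower_bound φ hφ_closed hφ_bot hφ_coercive
  -- the objective is lsc
  have hFlsc : LowerSemicontinuous (fun y : E => (q y : EReal) + φ (L y)) := by
    apply LowerSemicontinuous.add'
    · exact (continuous_coe_real_ereal.comp hq_cont).lowerSemicontinuous
    · exact LowerSemicontinuous.comp hφ_closed L.continuous
    · intro y
      exact EReal.continuousAt_add (Or.inl (EReal.coe_ne_top _)) (Or.inl (EReal.coe_ne_bot _))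
  set S : Set E := {y | y ∈ (N' : Set E) ∧ (q y : EReal) + φ (L y) ≤ (creal : EReal)} with hS
  have hSclosed : IsClosed S :=
    (N'.closed_of_finiteDimensional).inter (hFlsc.isClosed_preimage (creal : EReal))
  have hSne : S.Nonempty := ⟨p₀, hp₀, le_of_eq hc⟩
  -- bounds on S
  have hqub : ∀ y ∈ S, q y ≤ creal - mφ := by
    intro y hy
    have h1 : (q y : EReal) + (mφ : EReal) ≤ (creal : EReal) :=
      le_trans (add_le_add_right (hmφ (L y)) _) hy.2
    rw [← EReal.coe_add, EReal.coe_le_coe_iff] at h1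
    linarith
  have hφub : ∀ y ∈ S, φ (L y) ≤ ((creal - m : ℝ) : EReal) := by
    intro y hy
    have h1 : φ (L y) ≤ (creal : EReal) - (q y : EReal) := by
      rw [EReal.le_sub_iff_add_le (Or.inl (EReal.coe_ne_bot _)) (Or.inl (EReal.coe_ne_top _))]
      rw [add_comm]; exact hy.2
    rw [← EReal.coe_sub] at h1
    refine h1.trans ?_
    exact_mod_cast sub_le_sub_left (hm y) creal
  -- sublevel compactness of φ gives a norm bound on L y for y ∈ S
  obtain ⟨K, hKc, hK⟩ := mem_cocompact.mp
    (hφ_coercive.eventually_ge_atTop ((creal - m + 1 : ℝ) : EReal))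
  have hLyK : ∀ y ∈ S, L y ∈ K := by
    intro y hy
    by_contra hnot
    have h1 := hK hnot
    have h2 := hφub y hy
    have := le_trans h1 h2
    rw [EReal.coe_le_coe_iff] at this
    linarith
  obtain ⟨R, hR⟩ := hKc.isBounded.exists_norm_le
  -- S is bounded
  have hSbounded : Bornology.IsBounded S := by
    by_contra hnb
    have hun : ∀ k : ℕ, ∃ x, x ∈ S ∧ (k : ℝ) < ‖x‖ := by
      intro k
      by_contra hcon
      push_neg at hcon
      exact hnb (isBounded_iff_forall_norm_le.mpr ⟨k, fun x hx => hcon x hx⟩)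
    choose y hyS hyn using hun
    have hynpos : ∀ k, 0 < ‖y k‖ := fun k => lt_of_le_of_lt (Nat.cast_nonneg k) (hyn k)
    set u : ℕ → E := fun k => ‖y k‖⁻¹ • y k with hu
    have husph : ∀ k, u k ∈ Metric.sphere (0:E) 1 := by
      intro k
      rw [mem_sphere_zero_iff_norm, hu]
      simp [norm_smul, abs_of_pos (inv_pos.mpr (hynpos k)),
        inv_mul_cancel₀ (hynpos k).ne']
    obtain ⟨uInf, huInf, σ, hσ, htend⟩ := (isCompact_sphere (0:E) 1).tendsto_subseq husph
    have hnorm_tend : Tendsto (fun k => ‖y (σ k)‖) atTop atTop := by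
      apply tendsto_atTop_mono (f := fun k : ℕ => (k : ℝ))
      · intro k
        exact le_trans (Nat.cast_le.mpr hσ.le_apply) (hyn (σ k)).le
      · exact tendsto_natCast_atTop_atTop
    have hr_tend : Tendsto (fun k => ‖y (σ k)‖⁻¹) atTop (𝓝 0) :=
      hnorm_tend.inv_tendsto_atTop
    have huN' : ∀ k, u k ∈ N' := fun k => N'.smul_mem _ (hyS k).1
    have huInfN' : uInf ∈ N' :=
      N'.closed_of_finiteDimensional.mem_of_tendsto htend
        (Filter.Eventually.of_forall (fun k => huN' (σ k)))
    -- L uInf = 0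
    have hLtend0 : Tendsto (fun k => L (u (σ k))) atTop (𝓝 0) := by
      apply squeeze_zero_norm (a := fun k => ‖y (σ k)‖⁻¹ * R)
      · intro k
        rw [hu]
        simp only [_root_.map_smul, norm_smul, norm_inv, norm_norm]
        exact mul_le_mul_of_nonneg_left (hR _ (hLyK _ (hyS _)))
          (inv_nonneg.mpr (norm_nonneg _))
      · simpa using hr_tend.mul_const R
    have hLuInf : L uInf = 0 :=
      tendsto_nhds_unique ((L.continuous.continuousAt.tendsto).comp htend) hLtend0
    -- quad uInf = 0
    have hyu : ∀ k, y k = ‖y k‖ • u k := fun k => by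
      rw [hu, smul_smul, mul_inv_cancel₀ (hynpos k).ne', one_smul]
    have hquadu : ∀ k, quad (u k) =
        (‖y k‖⁻¹)^2 * (2*(q (y k) - q 0)) - (2 * ‖y k‖⁻¹) * lin (u k) := by
      intro k
      have h1 : quad (y k) = 2*(q (y k) - q 0) - 2 * lin (y k) := by
        have := hq_eq (y k); linarith
      have h2 : quad (u k) = (‖y k‖⁻¹)^2 * quad (y k) := by
        rw [hu]; exact hquad_smul _ _
      have h3 : lin (y k) = ‖y k‖ * lin (u k) := by
        conv_lhs => rw [hyu k]
        exact hlin_smul _ _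
      rw [h2, h1, h3]
      have hne := (hynpos k).ne'
      field_simp
    have hterm2 : Tendsto (fun k => (2 * ‖y (σ k)‖⁻¹) * lin (u (σ k))) atTop (𝓝 0) := by
      have hlt : Tendsto (fun k => lin (u (σ k))) atTop (𝓝 (lin uInf)) :=
        (hlin_cont.continuousAt.tendsto).comp htend
      simpa using (hr_tend.const_mul 2).mul hlt
    have hterm1 : Tendsto (fun k => (‖y (σ k)‖⁻¹)^2 * (2*(q (y (σ k)) - q 0))) atTop (𝓝 0) := by
      set M : ℝ := 2*(|creal - mφ| + |m| + |q 0|) with hM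
      have hMnn : 0 ≤ M := by positivity
      have hb : ∀ k, |2 * (q (y k) - q 0)| ≤ M := by
        intro k
        have h1 := hqub _ (hyS k)
        have h2 := hm (y k)
        rw [hM, abs_mul]
        have : |q (y k) - q 0| ≤ |creal - mφ| + |m| + |q 0| := by
          have ha : |q (y k)| ≤ |creal - mφ| + |m| := by
            rw [abs_le]
            constructor
            · calc -(|creal - mφ| + |m|) ≤ -|m| := by
                    have : (0:ℝ) ≤ |creal - mφ| := abs_nonneg _
                    linarith
                _ ≤ m := neg_abs_le m
                _ ≤ q (y k) := h2
            · calc q (y k) ≤ creal - mφ := h1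
                _ ≤ |creal - mφ| := le_abs_self _
                _ ≤ |creal - mφ| + |m| := by have : (0:ℝ) ≤ |m| := abs_nonneg _; linarith
          calc |q (y k) - q 0| ≤ |q (y k)| + |q 0| := abs_sub _ _
            _ ≤ |creal - mφ| + |m| + |q 0| := by linarith
        have h0 : |(2:ℝ)| = 2 := by norm_num
        rw [h0]
        linarith
      apply squeeze_zero_norm' (a := fun k => ‖y (σ k)‖⁻¹ * M)
      · filter_upwards [hnorm_tend.eventually_ge_atTop 1] with k hk
        have hrpos : 0 ≤ ‖y (σ k)‖⁻¹ := inv_nonneg.mpr (norm_nonneg _)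
        have hrle1 : ‖y (σ k)‖⁻¹ ≤ 1 := by
          rw [inv_le_one_iff₀]
          right; exact hk
        rw [Real.norm_eq_abs, abs_mul, abs_of_nonneg (by positivity : (0:ℝ) ≤ (‖y (σ k)‖⁻¹)^2)]
        calc (‖y (σ k)‖⁻¹)^2 * |2*(q (y (σ k)) - q 0)|
            ≤ (‖y (σ k)‖⁻¹ * 1) * M := by
              rw [pow_two]
              apply mul_le_mul
              · exact mul_le_mul_of_nonneg_left hrle1 hrpos
              · exact hb _
              · exact abs_nonneg _
              · positivity
          _ = ‖y (σ k)‖⁻¹ * M := by ring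
      · simpa using hr_tend.mul_const M
    have hquad_tend0 : Tendsto (fun k => quad (u (σ k))) atTop (𝓝 0) := by
      have heq2 : (fun k => quad (u (σ k))) = fun k =>
          (‖y (σ k)‖⁻¹)^2 * (2*(q (y (σ k)) - q 0)) - (2 * ‖y (σ k)‖⁻¹) * lin (u (σ k)) :=
        funext fun k => hquadu (σ k)
      rw [heq2]
      simpa using hterm1.sub hterm2
    have hquaduInf : quad uInf = 0 :=
      tendsto_nhds_unique ((hquad_cont.continuousAt.tendsto).comp htend) hquad_tend0
    have huInfN : uInf ∈ N := ⟨hLuInf, hquaduInf⟩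
    have hzero : uInf = 0 := (Submodule.disjoint_def.mp hNN'.disjoint) uInf huInfN huInfN'
    rw [hzero, mem_sphere_zero_iff_norm] at huInf
    simp at huInf
  have hScompact : IsCompact S := Metric.isCompact_of_isClosed_isBounded hSclosed hSbounded
  obtain ⟨ystar, hystar, hminS⟩ := lsc_min_on_compact hScompact hSclosed hSne hFlsc
  refine ⟨ystar, fun y' => ?_⟩
  obtain ⟨u', hu', p', hp', hup'⟩ := hdec y'
  have heq : (q y' : EReal) + φ (L y') = (q p' : EReal) + φ (L p') := by
    rw [← hup']; exact hinv p' u' hu'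
  rw [heq]
  by_cases hle : (q p' : EReal) + φ (L p') ≤ (creal : EReal)
  · exact hminS p' ⟨hp', hle⟩
  · exact le_trans hystar.2 (le_of_not_ge hle)


/-- Convexity for extended-real-valued functions. -/
def ERealConvex {E : Type*} [AddCommGroup E] [Module ℝ E] (φ : E → EReal) : Prop :=
  ∀ x y : E, ∀ a b : ℝ, 0 ≤ a → 0 ≤ b → a + b = 1 →
    φ (a • x + b • y) ≤ (a : EReal) * φ x + (b : EReal) * φ y

/-- if φ : ℝˡ → ℝ ∪ {+∞} is closed (lsc) proper convex and coercive,
D is any l×n matrix, and f : ℝⁿ × ℝᵈ → ℝ is a convex quadratic function bounded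
below, then (x,z) ↦ f(x,z) + φ(Dx) attains its minimum. -/
theorem stmt0 {n d l : ℕ}
    (φ : (Fin l → ℝ) → EReal)
    (hφ_closed : LowerSemicontinuous φ)
    (hφ_proper : (∀ v, φ v ≠ ⊥) ∧ (∃ v, φ v ≠ ⊤))
    (hφ_convex : ERealConvex φ)
    (hφ_coercive : Tendsto φ (cocompact (Fin l → ℝ)) atTop)
    (D : Matrix (Fin l) (Fin n) ℝ)
    -- f is a quadratic function on ℝⁿ × ℝᵈ, given in block form:
    (A : Matrix (Fin n) (Fin n) ℝ) (B : Matrix (Fin n) (Fin d) ℝ)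
    (C : Matrix (Fin d) (Fin d) ℝ) (e : Fin n → ℝ) (f₀ : Fin d → ℝ) (g : ℝ)
    (f : (Fin n → ℝ) → (Fin d → ℝ) → ℝ)
    (hf_def : ∀ x z, f x z =
      (1/2) * (x ⬝ᵥ A.mulVec x + 2 * (x ⬝ᵥ B.mulVec z) + z ⬝ᵥ C.mulVec z)
        + x ⬝ᵥ e + z ⬝ᵥ f₀ + g)
    (hf_convex : ConvexOn ℝ Set.univ (fun p : (Fin n → ℝ) × (Fin d → ℝ) => f p.1 p.2))
    (hf_bdd : BddBelow (Set.range (fun p : (Fin n → ℝ) × (Fin d → ℝ) => f p.1 p.2))) :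
    ∃ (x : Fin n → ℝ) (z : Fin d → ℝ), ∀ (x' : Fin n → ℝ) (z' : Fin d → ℝ),
      (f x z : EReal) + φ (D.mulVec x) ≤ (f x' z' : EReal) + φ (D.mulVec x') := by
  by_cases htop : ∀ x : Fin n → ℝ, φ (D.mulVec x) = ⊤
  · refine ⟨0, 0, fun x' z' => ?_⟩
    rw [htop 0, htop x', EReal.add_top_of_ne_bot (EReal.coe_ne_bot _),
      EReal.add_top_of_ne_bot (EReal.coe_ne_bot _)]
  push_neg at htop
  obtain ⟨x₀, hx₀⟩ := htop
  obtain ⟨mr, hmr⟩ := hf_bdd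
  set q : (Fin n → ℝ) × (Fin d → ℝ) → ℝ := fun p => f p.1 p.2 with hq
  set quad : (Fin n → ℝ) × (Fin d → ℝ) → ℝ := fun u =>
    u.1 ⬝ᵥ A.mulVec u.1 + 2*(u.1 ⬝ᵥ B.mulVec u.2) + u.2 ⬝ᵥ C.mulVec u.2 with hquad
  set cross : (Fin n → ℝ) × (Fin d → ℝ) → (Fin n → ℝ) × (Fin d → ℝ) → ℝ := fun p u =>
    (p.1 ⬝ᵥ A.mulVec u.1 + u.1 ⬝ᵥ A.mulVec p.1)/2 + p.1 ⬝ᵥ B.mulVec u.2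
      + u.1 ⬝ᵥ B.mulVec p.2 + (p.2 ⬝ᵥ C.mulVec u.2 + u.2 ⬝ᵥ C.mulVec p.2)/2 with hcross
  set lin : (Fin n → ℝ) × (Fin d → ℝ) → ℝ := fun u => u.1 ⬝ᵥ e + u.2 ⬝ᵥ f₀ with hlin
  let L : ((Fin n → ℝ) × (Fin d → ℝ)) →L[ℝ] (Fin l → ℝ) :=
    LinearMap.toContinuousLinearMap ((Matrix.mulVecLin D).comp (LinearMap.fst ℝ _ _))
  have hL : ∀ p : (Fin n → ℝ) × (Fin d → ℝ), L p = D.mulVec p.1 := fun p => rfl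
  have hI : ∀ p u : (Fin n → ℝ) × (Fin d → ℝ), ∀ t : ℝ,
      q (p + t • u) = q p + t * (cross p u + lin u) + t^2 * (quad u / 2) := by
    intro p u t
    simp only [hq, hquad, hcross, hlin, hf_def, Prod.fst_add, Prod.snd_add,
      Prod.smul_fst, Prod.smul_snd, Matrix.mulVec_add, Matrix.mulVec_smul,
      dotProduct_add, add_dotProduct, dotProduct_smul, smul_dotProduct, smul_eq_mul]
    ring
  have hII : ∀ p u : (Fin n → ℝ) × (Fin d → ℝ), ∀ s : ℝ,
      quad (p + s • u) = quad p + 2*s*(cross p u) + s^2 * quad u := by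
    intro p u s
    simp only [hquad, hcross, Prod.fst_add, Prod.snd_add, Prod.smul_fst, Prod.smul_snd,
      Matrix.mulVec_add, Matrix.mulVec_smul, dotProduct_add, add_dotProduct,
      dotProduct_smul, smul_dotProduct, smul_eq_mul]
    ring
  have hcross0 : ∀ u, cross 0 u = 0 := by
    intro u
    simp [hcross]
  -- continuity
  have cA : Continuous fun p : (Fin n → ℝ) × (Fin d → ℝ) => p.1 ⬝ᵥ A.mulVec p.1 :=
    continuous_fst.dotProduct (continuous_const.matrix_mulVec continuous_fst)
  have cB : Continuous fun p : (Fin n → ℝ) × (Fin d → ℝ) => p.1 ⬝ᵥ B.mulVec p.2 :=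
    continuous_fst.dotProduct (continuous_const.matrix_mulVec continuous_snd)
  have cC : Continuous fun p : (Fin n → ℝ) × (Fin d → ℝ) => p.2 ⬝ᵥ C.mulVec p.2 :=
    continuous_snd.dotProduct (continuous_const.matrix_mulVec continuous_snd)
  have ce : Continuous fun p : (Fin n → ℝ) × (Fin d → ℝ) => p.1 ⬝ᵥ e :=
    continuous_fst.dotProduct continuous_const
  have cf : Continuous fun p : (Fin n → ℝ) × (Fin d → ℝ) => p.2 ⬝ᵥ f₀ :=
    continuous_snd.dotProduct continuous_const
  have hquad_cont : Continuous quad := by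
    rw [hquad]
    exact (cA.add ((continuous_const.mul cB))).add cC
  have hlin_cont : Continuous lin := by
    rw [hlin]
    exact ce.add cf
  have hq_cont : Continuous q := by
    have : q = fun p => (1/2) * (p.1 ⬝ᵥ A.mulVec p.1 + 2 * (p.1 ⬝ᵥ B.mulVec p.2)
        + p.2 ⬝ᵥ C.mulVec p.2) + p.1 ⬝ᵥ e + p.2 ⬝ᵥ f₀ + g := by
      funext p
      simp only [hq]
      exact hf_def _ _
    rw [this]
    exact (((continuous_const.mul ((cA.add (continuous_const.mul cB)).add cC)).add ce).add
      cf).add continuous_const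
  clear_value q quad cross lin
  -- positivity of the quadratic form from convexity
  have hpos : ∀ u, 0 ≤ quad u := by
    intro u
    have h := hf_convex.2 (Set.mem_univ u) (Set.mem_univ (-u))
      (by norm_num : (0:ℝ) ≤ 1/2) (by norm_num : (0:ℝ) ≤ 1/2) (by norm_num : (1/2:ℝ) + 1/2 = 1)
    have hmid : (1/2:ℝ) • u + (1/2:ℝ) • (-u) = (0 : (Fin n → ℝ) × (Fin d → ℝ)) := by
      rw [smul_neg, add_neg_cancel]
    rw [hmid, smul_eq_mul, smul_eq_mul] at h
    have e1 : q u = q 0 + (cross 0 u + lin u) + quad u / 2 := by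
      have h1 := hI 0 u 1
      simpa using h1
    have e2 : q (-u) = q 0 - (cross 0 u + lin u) + quad u / 2 := by
      have h2 := hI 0 u (-1)
      rw [neg_one_smul, zero_add] at h2
      rw [h2]; ring
    have h0 : q 0 ≤ 1/2 * q u + 1/2 * q (-u) := h
    rw [e1, e2, hcross0] at h0
    linarith
  have hm : ∀ p, mr ≤ q p := fun p => hmr ⟨p, rfl⟩
  have hy₀ : φ (L ((x₀, 0) : (Fin n → ℝ) × (Fin d → ℝ))) ≠ ⊤ := by
    rw [hL]
    exact hx₀
  obtain ⟨y, hy⟩ := aux_main q quad cross lin hq_cont hquad_cont hlin_cont hI hII hcross0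
    hpos mr hm L φ hφ_closed hφ_proper.1 hφ_coercive (x₀, 0) hy₀
  refine ⟨y.1, y.2, fun x' z' => ?_⟩
  have := hy (x', z')
  rw [hL, hL] at this
  simp only [hq] at this
  exact this
end

section
/- Let G be symmetric positive definite and let w∞₁, w∞₂, and a bounded sequence {wⁱ} satisfy: some subsequence of {wⁱ} converges to w∞₁, some subsequence converges to w∞₂, and both limits a_p = lim_{i→∞} ‖wⁱ − w∞ₚ‖_G exist for p = 1, 2. Then a₁² − a₂² = −‖w∞₁ − w∞₂‖²_G and a₁² − a₂² = ‖w∞₁ − w∞₂‖²_G, hence w∞₁ = w∞₂. -/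
open Matrix Filter

/-- key computation in Lemma 5: let G be symmetric PD, {wⁱ} bounded,
with subsequences converging to w∞₁ and w∞₂, and suppose both limits
a_p = lim ‖wⁱ − w∞ₚ‖_G exist (p = 1,2). Then a₁² − a₂² = −‖w∞₁ − w∞₂‖²_G and
a₁² − a₂² = ‖w∞₁ − w∞₂‖²_G, hence w∞₁ = w∞₂. -/
theorem stmt8 {n : ℕ} (G : Matrix (Fin n) (Fin n) ℝ) (hG : G.PosDef)
    (w : ℕ → (Fin n → ℝ)) (winf1 winf2 : Fin n → ℝ) (a1 a2 : ℝ)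
    (hbdd : Bornology.IsBounded (Set.range w))
    (σ1 σ2 : ℕ → ℕ) (hσ1 : StrictMono σ1) (hσ2 : StrictMono σ2)
    (hconv1 : Tendsto (w ∘ σ1) atTop (nhds winf1))
    (hconv2 : Tendsto (w ∘ σ2) atTop (nhds winf2))
    (ha1 : Tendsto (fun i => Real.sqrt ((w i - winf1) ⬝ᵥ G.mulVec (w i - winf1)))
      atTop (nhds a1))
    (ha2 : Tendsto (fun i => Real.sqrt ((w i - winf2) ⬝ᵥ G.mulVec (w i - winf2)))
      atTop (nhds a2)) :
    a1 ^ 2 - a2 ^ 2 = -((winf1 - winf2) ⬝ᵥ G.mulVec (winf1 - winf2)) ∧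
    a1 ^ 2 - a2 ^ 2 = (winf1 - winf2) ⬝ᵥ G.mulVec (winf1 - winf2) ∧
    winf1 = winf2 := by
  set q : (Fin n → ℝ) → ℝ := fun x => x ⬝ᵥ G.mulVec x with hq
  have hqnn : ∀ x, 0 ≤ q x := by
    intro x
    have := hG.posSemidef.dotProduct_mulVec_nonneg x
    simpa using this
  have hmv : Continuous (fun x : Fin n → ℝ => G.mulVec x) := by
    have : (fun x : Fin n → ℝ => G.mulVec x) = G.mulVecLin := by
      ext x i; simp [Matrix.mulVecLin]
    rw [this]
    exact LinearMap.continuous_of_finiteDimensional _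
  have hqcont : Continuous q := by
    have : q = fun x => ∑ i, x i * (G.mulVec x) i := by
      funext x; rfl
    rw [this]
    exact continuous_finset_sum _ fun i _ =>
      (continuous_apply i).mul ((continuous_apply i).comp hmv)
  -- limits of squared norms
  have hsq1 : Tendsto (fun i => q (w i - winf1)) atTop (nhds (a1 ^ 2)) := by
    have := ha1.pow 2
    convert this using 2 with i
    rw [Real.sq_sqrt (hqnn _)]
  have hsq2 : Tendsto (fun i => q (w i - winf2)) atTop (nhds (a2 ^ 2)) := by
    have := ha2.pow 2
    convert this using 2 with i
    rw [Real.sq_sqrt (hqnn _)]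
  -- along σ1
  have h11 : Tendsto (fun i => q (w (σ1 i) - winf1)) atTop (nhds (q (winf1 - winf1))) :=
    (hqcont.tendsto _).comp (hconv1.sub_const winf1)
  have h11' : Tendsto (fun i => q (w (σ1 i) - winf1)) atTop (nhds (a1 ^ 2)) :=
    hsq1.comp hσ1.tendsto_atTop
  have h12 : Tendsto (fun i => q (w (σ1 i) - winf2)) atTop (nhds (q (winf1 - winf2))) :=
    (hqcont.tendsto _).comp (hconv1.sub_const winf2)
  have h12' : Tendsto (fun i => q (w (σ1 i) - winf2)) atTop (nhds (a2 ^ 2)) :=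
    hsq2.comp hσ1.tendsto_atTop
  -- along σ2
  have h22 : Tendsto (fun i => q (w (σ2 i) - winf2)) atTop (nhds (q (winf2 - winf2))) :=
    (hqcont.tendsto _).comp (hconv2.sub_const winf2)
  have h22' : Tendsto (fun i => q (w (σ2 i) - winf2)) atTop (nhds (a2 ^ 2)) :=
    hsq2.comp hσ2.tendsto_atTop
  have h21 : Tendsto (fun i => q (w (σ2 i) - winf1)) atTop (nhds (q (winf2 - winf1))) :=
    (hqcont.tendsto _).comp (hconv2.sub_const winf1)
  have h21' : Tendsto (fun i => q (w (σ2 i) - winf1)) atTop (nhds (a1 ^ 2)) :=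
    hsq1.comp hσ2.tendsto_atTop
  have ea1 : a1 ^ 2 = q (winf1 - winf1) := tendsto_nhds_unique h11' h11
  have ea2 : a2 ^ 2 = q (winf1 - winf2) := tendsto_nhds_unique h12' h12
  have ea2' : a2 ^ 2 = q (winf2 - winf2) := tendsto_nhds_unique h22' h22
  have ea1' : a1 ^ 2 = q (winf2 - winf1) := tendsto_nhds_unique h21' h21
  have hzero : q (winf1 - winf1) = 0 := by simp [hq, Matrix.mulVec_zero]
  have hzero' : q (winf2 - winf2) = 0 := by simp [hq, Matrix.mulVec_zero]
  have hqsymm : q (winf2 - winf1) = q (winf1 - winf2) := by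
    have : winf2 - winf1 = -(winf1 - winf2) := by abel
    rw [this]
    simp only [hq, Matrix.mulVec_neg, dotProduct_neg, neg_dotProduct, neg_neg]
  have heq : winf1 = winf2 := by
    have hq0 : q (winf2 - winf1) = 0 := by
      rw [← ea1', ea1, hzero]
    by_contra hne
    have hx : winf2 - winf1 ≠ 0 := sub_ne_zero.mpr (Ne.symm hne)
    have := hG.dotProduct_mulVec_pos hx
    simp only [RCLike.star_def, star_trivial] at this
    rw [hq] at hq0
    simp only at hq0
    exact absurd hq0 (ne_of_gt (by simpa using this))
  refine ⟨?_, ?_, heq⟩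
  · rw [ea1, ea2, hzero]; ring
  · rw [ea1', ea2', hzero', hqsymm]; ring
end
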